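/- For integers n > 1 let p_n denote the unique root in (2, ∞) of ψ_n(p) = 2^{1−n} ∑_{k=0}^n C(n,k) (k/n)^{1/p} − 2^{1/p}. Then p_n = 2 + O(n^{−1}); that is, there exists a constant C > 0 such that 0 < p_n − 2 ≤ C/n for all sufficiently large n. -/

import Mathlib

open Finset Real

/-- `ψ_n(p) = 2^{1−n} ∑_{k=0}^n C(n,k) (k/n)^{1/p} − 2^{1/p}`. -/
noncomputable def psiN (n : ℕ) (p : ℝ) : ℝ :=
  (2 : ℝ) ^ ((1 : ℝ) - (n : ℝ)) *
      ∑ k ∈ Finset.range (n + 1), (n.choose k : ℝ) * ((k : ℝ) / (n : ℝ)) ^ (1 / p)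
    - (2 : ℝ) ^ (1 / p)

theorem sumS1 (n : ℕ) : ∑ k ∈ range (n + 1), 2 * (k * n.choose k) = n * 2 ^ n := by
  cases n with
  | zero => decide
  | succ m =>
    rw [Finset.sum_range_succ']
    simp only [Nat.zero_mul, Nat.mul_zero, add_zero]
    have : ∀ k, 2 * ((k + 1) * (m + 1).choose (k + 1)) = 2 * ((m + 1) * m.choose k) := by
      intro k
      rw [mul_comm (k+1) ((m+1).choose (k+1)), ← Nat.add_one_mul_choose_eq]
    rw [Finset.sum_congr rfl fun k _ => this k]
    rw [← Finset.mul_sum, ← Finset.mul_sum, Nat.sum_range_choose]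
    ring

theorem sumS2 (n : ℕ) (hn : 2 ≤ n) :
    ∑ k ∈ range (n + 1), 4 * (k * (k - 1) * n.choose k) = n * (n - 1) * 2 ^ n := by
  obtain ⟨m, rfl⟩ : ∃ m, n = m + 2 := ⟨n - 2, by omega⟩
  rw [Finset.sum_range_succ', Finset.sum_range_succ']
  simp only [Nat.zero_mul, Nat.mul_zero, add_zero, Nat.sub_self, Nat.mul_one]
  have : ∀ k, 4 * ((k + 1 + 1) * ((k + 1 + 1) - 1) * (m + 2).choose (k + 1 + 1))
      = 4 * ((m + 2) * (m + 1) * m.choose k) := by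
    intro k
    have h1 : (m + 2).choose (k + 2) * (k + 2) = (m + 2) * (m+1).choose (k+1) := by
      rw [← Nat.add_one_mul_choose_eq]
    have h2 : (m + 1).choose (k + 1) * (k + 1) = (m + 1) * m.choose k := by
      rw [← Nat.add_one_mul_choose_eq]
    have : (k+1+1) - 1 = k + 1 := rfl
    rw [this]
    calc 4 * ((k + 2) * (k + 1) * (m + 2).choose (k + 2))
        = 4 * ((k+1) * ((m + 2).choose (k + 2) * (k + 2))) := by ring
      _ = 4 * ((m+2) * ((m + 1).choose (k + 1) * (k + 1))) := by rw [h1]; ring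
      _ = 4 * ((m + 2) * (m + 1) * m.choose k) := by rw [h2]; ring
  rw [Finset.sum_congr rfl fun k _ => this k]
  rw [← Finset.mul_sum, ← Finset.mul_sum, Nat.sum_range_choose]
  have : m + 2 - 1 = m + 1 := rfl
  rw [this]
  ring

theorem sumS2' (n : ℕ) (hn : 2 ≤ n) :
    ∑ k ∈ range (n + 1), 4 * (k * k * n.choose k) = n * (n - 1) * 2 ^ n + n * 2 ^ (n + 1) := by
  have hpt : ∀ k : ℕ, 4 * (k * k * n.choose k)
      = 4 * (k * (k - 1) * n.choose k) + 2 * (2 * (k * n.choose k)) := by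
    intro k
    cases k with
    | zero => simp
    | succ j => simp only [Nat.succ_sub_one]; ring
  rw [Finset.sum_congr rfl fun k _ => hpt k, Finset.sum_add_distrib, sumS2 n hn,
    ← Finset.mul_sum, sumS1]
  ring

/-- Real versions of the binomial moments. -/
theorem realS0 (n : ℕ) : ∑ k ∈ range (n + 1), (n.choose k : ℝ) = 2 ^ n := by
  rw [← Nat.cast_sum, Nat.sum_range_choose]
  push_cast
  ring

theorem realS1 (n : ℕ) : ∑ k ∈ range (n + 1), (k : ℝ) * n.choose k = n * 2 ^ n / 2 := by
  have := sumS1 n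
  have h : ((∑ k ∈ range (n + 1), 2 * (k * n.choose k) : ℕ) : ℝ) = (n * 2 ^ n : ℕ) := by
    rw [this]
  push_cast at h
  rw [← Finset.mul_sum] at h
  linarith [h]

theorem realS2 (n : ℕ) (hn : 2 ≤ n) :
    ∑ k ∈ range (n + 1), (k : ℝ) ^ 2 * n.choose k = (n * (n - 1) + 2 * n) * 2 ^ n / 4 := by
  have := sumS2' n hn
  have h : ((∑ k ∈ range (n + 1), 4 * (k * k * n.choose k) : ℕ) : ℝ)
      = ((n * (n - 1) * 2 ^ n + n * 2 ^ (n + 1) : ℕ) : ℝ) := by rw [this]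
  have hn1 : ((n - 1 : ℕ) : ℝ) = (n : ℝ) - 1 := by
    have : 1 ≤ n := by omega
    push_cast [this]
    ring
  push_cast [hn1] at h
  rw [← Finset.mul_sum] at h
  have heq : ∀ k ∈ range (n+1), ((k:ℝ) * k * n.choose k) = (k:ℝ)^2 * n.choose k := by
    intro k _; ring
  rw [Finset.sum_congr rfl heq, pow_succ] at h
  linear_combination h / 4

/-- quadratic lower bound for `√2 · x^{1/2}` on `[0,1]`. -/
theorem quadLB (x : ℝ) (h0 : 0 ≤ x) (h1 : x ≤ 1) :
    3 * x - 2 * x ^ 2 ≤ Real.sqrt 2 * x ^ ((1:ℝ)/2) := by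
  rw [← Real.sqrt_eq_rpow]
  have hs0 : 0 ≤ Real.sqrt x := Real.sqrt_nonneg x
  have hsx : Real.sqrt x ^ 2 = x := Real.sq_sqrt h0
  have h2 : Real.sqrt 2 ^ 2 = 2 := Real.sq_sqrt (by norm_num)
  set s := Real.sqrt x with hs
  rw [← hsx]
  have key : Real.sqrt 2 * s - (3 * s ^ 2 - 2 * (s ^ 2) ^ 2)
      = s * (s + Real.sqrt 2) * (Real.sqrt 2 * s - 1) ^ 2 := by
    linear_combination (-(s ^ 4) - Real.sqrt 2 * s ^ 3 + 2 * s ^ 2) * h2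
  nlinarith [key, mul_nonneg (mul_nonneg hs0 (add_nonneg hs0 (Real.sqrt_nonneg 2)))
    (sq_nonneg (Real.sqrt 2 * s - 1))]

set_option maxHeartbeats 1000000 in
theorem keyPos (n : ℕ) (hn : 10 ≤ n) (p : ℝ) (hp : 2 + 10 / (n : ℝ) < p) :
    0 < psiN n p := by
  have hn' : (10 : ℝ) ≤ n := by exact_mod_cast hn
  have hnpos : (0 : ℝ) < n := by linarith
  have hnne : (n : ℝ) ≠ 0 := ne_of_gt hnpos
  have hp2 : 2 < p := by
    have : 0 < 10 / (n:ℝ) := by positivity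
    linarith
  have hppos : (0:ℝ) < p := by linarith
  set α : ℝ := 1 / p with hα
  have hα_pos : 0 < α := by positivity
  have hq : α * (2 * n + 10) < n := by
    have h1 : α * p = 1 := by rw [hα, one_div, inv_mul_cancel₀ hppos.ne']
    have h2 : α * (2 + 10 / n) < α * p := by
      apply mul_lt_mul_of_pos_left hp hα_pos
    have h3 : α * (2 + 10 / n) * n < 1 * n := by
      rw [h1] at h2
      exact mul_lt_mul_of_pos_right h2 hnpos
    have h4 : α * (2 + 10 / n) * n = α * (2 * n + 10) := by
      field_simp
    rw [h4, one_mul] at h3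
    exact h3
  have hα_half : α ≤ 1/2 := by nlinarith [mul_pos hα_pos hnpos]
  have hexp : α - 1/2 < -(5 / (3 * (n:ℝ))) := by
    rw [← sub_pos]
    have key : (-(5 / (3 * (n:ℝ))) - (α - 1/2)) * (3 * n * (2 * n + 10))
        = (n - α * (2*n+10)) * (3 * n) + 5 * ((n:ℝ) - 10) := by
      field_simp
      ring
    have hpos : 0 < (n - α * (2*n+10)) * (3 * n) + 5 * ((n:ℝ) - 10) := by
      have := mul_pos (sub_pos.mpr hq) (by positivity : (0:ℝ) < 3 * n)
      nlinarith
    have hden : (0:ℝ) < 3 * n * (2 * n + 10) := by positivity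
    rw [← key] at hpos
    nlinarith [hpos, hden]
  -- binomial moment sums
  have hA1 := realS1 n
  have hA2 := realS2 n (by omega)
  -- exact value of the quadratic sum
  have hkey : ∑ k ∈ range (n+1), (n.choose k : ℝ) * (3 * ((k:ℝ)/n) - 2 * ((k:ℝ)/n)^2)
      = 2^n * (1 - 1/(2*(n:ℝ))) := by
    have hterm : ∀ k ∈ range (n+1), (n.choose k : ℝ) * (3 * ((k:ℝ)/n) - 2*((k:ℝ)/n)^2)
        = (3/(n:ℝ)) * ((k:ℝ) * n.choose k) - (2/(n:ℝ)^2) * ((k:ℝ)^2 * n.choose k) := by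
      intro k _
      field_simp
    rw [Finset.sum_congr rfl hterm, Finset.sum_sub_distrib, ← Finset.mul_sum, ← Finset.mul_sum,
      hA1, hA2]
    field_simp
    ring
  -- lower bound for the square-root sum
  have hB : 2^n * (1 - 1/(2*(n:ℝ))) ≤ Real.sqrt 2 * ∑ k ∈ range (n+1),
      (n.choose k : ℝ) * ((k:ℝ)/n) ^ ((1:ℝ)/2) := by
    rw [Finset.mul_sum, ← hkey]
    apply Finset.sum_le_sum
    intro k hk
    have hx0 : (0:ℝ) ≤ (k:ℝ)/n := by positivity
    have hx1 : (k:ℝ)/n ≤ 1 := by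
      rw [div_le_one hnpos]
      exact_mod_cast Nat.lt_succ_iff.mp (Finset.mem_range.mp hk)
    have hql := quadLB ((k:ℝ)/n) hx0 hx1
    have hc : (0:ℝ) ≤ n.choose k := by positivity
    calc (n.choose k : ℝ) * (3 * ((k:ℝ)/n) - 2*((k:ℝ)/n)^2)
        ≤ (n.choose k : ℝ) * (Real.sqrt 2 * ((k:ℝ)/n) ^ ((1:ℝ)/2)) :=
          mul_le_mul_of_nonneg_left hql hc
      _ = Real.sqrt 2 * ((n.choose k : ℝ) * ((k:ℝ)/n) ^ ((1:ℝ)/2)) := by ring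
  -- monotonicity in the exponent
  have hA : ∑ k ∈ range (n+1), (n.choose k:ℝ) * ((k:ℝ)/n) ^ ((1:ℝ)/2)
      ≤ ∑ k ∈ range (n+1), (n.choose k:ℝ) * ((k:ℝ)/n) ^ α := by
    apply Finset.sum_le_sum
    intro k hk
    apply mul_le_mul_of_nonneg_left _ (by positivity)
    rcases Nat.eq_zero_or_pos k with rfl | hkpos
    · simp only [Nat.cast_zero, zero_div]
      rw [Real.zero_rpow (by norm_num : (1:ℝ)/2 ≠ 0), Real.zero_rpow (ne_of_gt hα_pos)]
    · have hx0 : (0:ℝ) < (k:ℝ)/n := by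
        apply div_pos _ hnpos
        exact_mod_cast hkpos
      have hx1 : (k:ℝ)/n ≤ 1 := by
        rw [div_le_one hnpos]
        exact_mod_cast Nat.lt_succ_iff.mp (Finset.mem_range.mp hk)
      exact Real.rpow_le_rpow_of_exponent_ge hx0 hx1 hα_half
  set T : ℝ := ∑ k ∈ range (n+1), (n.choose k:ℝ) * ((k:ℝ)/n) ^ α with hT
  have hs2pos : 0 < Real.sqrt 2 := Real.sqrt_pos.mpr two_pos
  have hs2sq : Real.sqrt 2 * Real.sqrt 2 = 2 := Real.mul_self_sqrt (by norm_num)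
  have hTlb : 2^n * (1 - 1/(2*(n:ℝ))) ≤ Real.sqrt 2 * T :=
    le_trans hB (mul_le_mul_of_nonneg_left hA hs2pos.le)
  have hPpos : (0:ℝ) < 2^n := by positivity
  -- lower bound on the normalized sum
  have h1 : Real.sqrt 2 * (1 - 1/(2*(n:ℝ))) ≤ 2 / 2^n * T := by
    rw [div_mul_eq_mul_div, le_div_iff₀ hPpos]
    have hmul : Real.sqrt 2 * (2^n * (1 - 1/(2*(n:ℝ)))) ≤ Real.sqrt 2 * (Real.sqrt 2 * T) :=
      mul_le_mul_of_nonneg_left hTlb hs2pos.le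
    have hrw : Real.sqrt 2 * (Real.sqrt 2 * T) = 2 * T := by
      rw [← mul_assoc, hs2sq]
    rw [hrw] at hmul
    nlinarith [hmul]
  -- upper bound for 2^α
  have hfinal : (2:ℝ) ^ α < Real.sqrt 2 * (1 - 1/(2*(n:ℝ))) := by
    have hsq2 : (2:ℝ) ^ ((1:ℝ)/2) = Real.sqrt 2 := (Real.sqrt_eq_rpow 2).symm
    have hsplit : (2:ℝ) ^ α = Real.sqrt 2 * (2:ℝ) ^ (α - 1/2) := by
      rw [← hsq2, ← Real.rpow_add two_pos]
      norm_num
    have hlt : (2:ℝ) ^ (α - 1/2) < (2:ℝ) ^ (-(5/(3*(n:ℝ)))) :=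
      Real.rpow_lt_rpow_of_exponent_lt one_lt_two hexp
    have hLpos : 0 < Real.log 2 := Real.log_pos one_lt_two
    set t : ℝ := 5/(3*(n:ℝ)) * Real.log 2 with ht
    have ht_pos : 0 < t := by positivity
    have hexp2 : (2:ℝ) ^ (-(5/(3*(n:ℝ)))) = Real.exp (-t) := by
      rw [Real.rpow_def_of_pos two_pos, ht]
      ring_nf
    have h6 : Real.exp (-t) ≤ 1/(1+t) := by
      rw [Real.exp_neg, one_div]
      exact inv_anti₀ (by linarith) (by linarith [Real.add_one_le_exp t])
    have h7 : 1/(1+t) < 1 - 1/(2*(n:ℝ)) := by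
      have hlog1 : 0.6931471803 < Real.log 2 := Real.log_two_gt_d9
      have hlog2 : Real.log 2 < 0.6931471808 := Real.log_two_lt_d9
      have hu_pos : 0 < (n:ℝ)⁻¹ := by positivity
      have hinv : (n:ℝ)⁻¹ ≤ 1/10 := by
        rw [inv_le_comm₀ (by linarith) (by norm_num)]
        simpa using hn'
      rw [div_lt_iff₀ (by positivity), ht]
      have h2n : 1/(2*(n:ℝ)) = 1/2 * (n:ℝ)⁻¹ := by ring
      rw [h2n]
      have hprod : (0:ℝ) ≤ (n:ℝ)⁻¹ * Real.log 2 * (1/10 - (n:ℝ)⁻¹) :=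
        mul_nonneg (mul_nonneg hu_pos.le hLpos.le) (by linarith)
      have h5n : 5/(3*(n:ℝ)) = 5/3 * (n:ℝ)⁻¹ := by ring
      rw [h5n]
      nlinarith [hprod, mul_pos hu_pos (show (0:ℝ) < Real.log 2 - 0.6931471803 by linarith),
        hu_pos, hinv]
    calc (2:ℝ) ^ α = Real.sqrt 2 * (2:ℝ) ^ (α - 1/2) := hsplit
      _ < Real.sqrt 2 * (2:ℝ) ^ (-(5/(3*(n:ℝ)))) := by
          exact mul_lt_mul_of_pos_left hlt hs2pos
      _ = Real.sqrt 2 * Real.exp (-t) := by rw [hexp2]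
      _ ≤ Real.sqrt 2 * (1/(1+t)) := mul_le_mul_of_nonneg_left h6 hs2pos.le
      _ < Real.sqrt 2 * (1 - 1/(2*(n:ℝ))) := mul_lt_mul_of_pos_left h7 hs2pos
  -- assemble
  have h2pow : (2:ℝ) ^ ((1:ℝ) - (n:ℝ)) = 2 / 2^n := by
    rw [Real.rpow_sub (by norm_num), Real.rpow_one, Real.rpow_natCast]
  rw [psiN, h2pow, ← hα, ← hT]
  linarith [h1, hfinal]

theorem stmt9 (pn : ℕ → ℝ)
    (hroot : ∀ n : ℕ, 2 ≤ n → pn n ∈ Set.Ioi (2 : ℝ) ∧ psiN n (pn n) = 0) :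
    ∃ C > (0 : ℝ), ∃ N : ℕ, ∀ n : ℕ, N ≤ n →
      0 < pn n - 2 ∧ pn n - 2 ≤ C / n := by
  refine ⟨10, by norm_num, 10, fun n hn => ?_⟩
  obtain ⟨hmem, hzero⟩ := hroot n (by omega)
  have h2 : (2:ℝ) < pn n := hmem
  refine ⟨by linarith, ?_⟩
  by_contra hcon
  push_neg at hcon
  have : 2 + 10 / (n:ℝ) < pn n := by linarith
  have := keyPos n hn (pn n) this
  rw [hzero] at this
  exact lt_irrefl 0 this
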